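/- Let m > 0, c > 0, ε > 0, B > 0, and let J be a positive integer. Let σ_1², …, σ_J² be positive reals with ∑_{j=1}^J j^{2m} σ_j² ≤ c²/π^{2m}, and set η = exp(−2B/J) · ( ∏_{j=1}^J σ_j⁴/(σ_j²+ε²) )^{1/J}. Then J·η ≤ (c²/π^{2m}) · ( e^{B/m} · J! )^{−2m/J}. -/

import Mathlib

noncomputable section

/-- **Key inequality for the insufficient-regime bound:** if `σ_1², …, σ_J²` are positive with
`∑_{j=1}^J j^{2m} σ_j² ≤ c²/π^{2m}` and
`η = exp(−2B/J) (∏_{j=1}^J σ_j⁴/(σ_j²+ε²))^{1/J}`, then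
`J η ≤ (c²/π^{2m}) (e^{B/m} J!)^{−2m/J}`. -/
theorem insufficient_key_inequality (m c ε B : ℝ) (hm : 0 < m) (hc : 0 < c) (hε : 0 < ε)
    (hB : 0 < B) (J : ℕ) (hJ : 0 < J) (σ2 : Fin J → ℝ) (hσ : ∀ j, 0 < σ2 j)
    (hconstr : ∑ j : Fin J, ((j : ℕ) + 1 : ℝ) ^ (2 * m) * σ2 j ≤ c ^ 2 / Real.pi ^ (2 * m)) :
    (J : ℝ) *
        (Real.exp (-(2 * B) / J) *
          (∏ j : Fin J, (σ2 j) ^ 2 / (σ2 j + ε ^ 2)) ^ (1 / (J : ℝ))) ≤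
      c ^ 2 / Real.pi ^ (2 * m) *
        (Real.exp (B / m) * (J.factorial : ℝ)) ^ (-(2 * m) / (J : ℝ)) := by
  have hJR : (0:ℝ) < J := by exact_mod_cast hJ
  have hπ : (0:ℝ) < Real.pi ^ (2*m) := Real.rpow_pos_of_pos Real.pi_pos _
  have hfac : (0:ℝ) < (J.factorial : ℝ) := by exact_mod_cast J.factorial_pos
  -- termwise bound on ratios
  have hratio : ∀ j, (σ2 j)^2 / (σ2 j + ε^2) ≤ σ2 j := by
    intro j
    rw [div_le_iff₀ (add_pos (hσ j) (pow_pos hε 2))]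
    nlinarith [(hσ j).le, sq_nonneg ε, hε]
  have hQpos : 0 < ∏ j, (σ2 j)^2 / (σ2 j + ε^2) :=
    Finset.prod_pos (fun j _ => div_pos (pow_pos (hσ j) 2) (add_pos (hσ j) (pow_pos hε 2)))
  have hPpos : 0 < ∏ j, σ2 j := Finset.prod_pos (fun j _ => hσ j)
  have hQP : (∏ j, (σ2 j)^2 / (σ2 j + ε^2)) ≤ ∏ j, σ2 j :=
    Finset.prod_le_prod
      (fun j _ => (div_pos (pow_pos (hσ j) 2) (add_pos (hσ j) (pow_pos hε 2))).le)
      (fun j _ => (hratio j))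
  -- AM-GM
  set z : Fin J → ℝ := fun j => ((j : ℕ) + 1 : ℝ) ^ (2 * m) * σ2 j with hz
  have hzpos : ∀ j, 0 < z j := fun j => by
    have : (0:ℝ) < ((j : ℕ) + 1 : ℝ) ^ (2 * m) := Real.rpow_pos_of_pos (by positivity) _
    exact mul_pos this (hσ j)
  have hamgm : ∏ j, z j ^ (1/(J:ℝ)) ≤ ∑ j, (1/(J:ℝ)) * z j := by
    apply Real.geom_mean_le_arith_mean_weighted
    · intro i _; positivity
    · simp [Finset.sum_const, Finset.card_univ]
      field_simp
    · intro i _; exact (hzpos i).le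
  have hsum : ∑ j, (1/(J:ℝ)) * z j ≤ c ^ 2 / Real.pi ^ (2*m) / J := by
    rw [← Finset.mul_sum]
    rw [div_eq_mul_inv (c ^ 2 / Real.pi ^ (2*m)), mul_comm (c ^ 2 / Real.pi ^ (2*m)), one_div]
    exact mul_le_mul_of_nonneg_left hconstr (by positivity)
  -- rewrite product of z's
  have hprodz : (∏ j, z j) = ((J.factorial : ℝ)) ^ (2*m) * ∏ j, σ2 j := by
    rw [Finset.prod_mul_distrib]
    congr 1
    rw [Real.finset_prod_rpow _ _ (fun i _ => by positivity)]
    congr 1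
    rw [Fin.prod_univ_eq_prod_range (fun i => ((i:ℝ) + 1))]
    exact_mod_cast congrArg (Nat.cast : ℕ → ℝ) (Finset.prod_range_add_one_eq_factorial J)
  have hpowmul : (∏ j, z j) ^ (1/(J:ℝ)) =
      ((J.factorial : ℝ)) ^ ((2*m)/(J:ℝ)) * (∏ j, σ2 j) ^ (1/(J:ℝ)) := by
    rw [hprodz, Real.mul_rpow (Real.rpow_nonneg hfac.le _) hPpos.le,
      ← Real.rpow_mul hfac.le]
    congr 2
    ring
  have hkey : (∏ j, σ2 j) ^ (1/(J:ℝ)) ≤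
      c ^ 2 / Real.pi ^ (2*m) / J * ((J.factorial : ℝ)) ^ (-(2*m)/(J:ℝ)) := by
    have h1 : ((J.factorial : ℝ)) ^ ((2*m)/(J:ℝ)) * (∏ j, σ2 j) ^ (1/(J:ℝ))
        ≤ c ^ 2 / Real.pi ^ (2*m) / J := by
      rw [← hpowmul, ← Real.finset_prod_rpow _ _ (fun i _ => (hzpos i).le)]
      exact hamgm.trans hsum
    have ht : (0:ℝ) < ((J.factorial : ℝ)) ^ ((2*m)/(J:ℝ)) := Real.rpow_pos_of_pos hfac _
    have hinv : ((J.factorial : ℝ)) ^ (-(2*m)/(J:ℝ)) =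
        (((J.factorial : ℝ)) ^ ((2*m)/(J:ℝ)))⁻¹ := by
      rw [neg_div, Real.rpow_neg hfac.le]
    rw [hinv, ← div_eq_mul_inv, le_div_iff₀ ht]
    nlinarith [h1, ht, Real.rpow_nonneg hPpos.le (1/(J:ℝ))]
  -- ratio product bound
  have hQle : (∏ j, (σ2 j)^2 / (σ2 j + ε^2)) ^ (1/(J:ℝ)) ≤ (∏ j, σ2 j) ^ (1/(J:ℝ)) :=
    Real.rpow_le_rpow hQpos.le hQP (by positivity)
  -- rewrite RHS
  have hE : Real.exp (B / m) ^ (-(2*m)/(J:ℝ)) = Real.exp (-(2*B)/(J:ℝ)) := by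
    rw [← Real.exp_mul]
    congr 1
    field_simp
  have hRHS : (Real.exp (B / m) * (J.factorial : ℝ)) ^ (-(2 * m) / (J:ℝ)) =
      Real.exp (-(2*B)/(J:ℝ)) * ((J.factorial : ℝ)) ^ (-(2*m)/(J:ℝ)) := by
    rw [Real.mul_rpow (Real.exp_pos _).le hfac.le, hE]
  rw [hRHS]
  have hEpos : (0:ℝ) < Real.exp (-(2*B)/(J:ℝ)) := Real.exp_pos _
  calc (J : ℝ) * (Real.exp (-(2 * B) / J) *
          (∏ j, (σ2 j) ^ 2 / (σ2 j + ε ^ 2)) ^ (1 / (J : ℝ)))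
      ≤ (J : ℝ) * (Real.exp (-(2 * B) / J) *
          (c ^ 2 / Real.pi ^ (2*m) / J * ((J.factorial : ℝ)) ^ (-(2*m)/(J:ℝ)))) := by
        apply mul_le_mul_of_nonneg_left _ hJR.le
        exact mul_le_mul_of_nonneg_left (hQle.trans hkey) hEpos.le
    _ = c ^ 2 / Real.pi ^ (2 * m) *
        (Real.exp (-(2*B)/(J:ℝ)) * ((J.factorial : ℝ)) ^ (-(2*m)/(J:ℝ))) := by
        field_simp
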